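/- arXiv:2210.15966 — 4 statements merged into one kernel-verified Lean document; each statement's English description precedes it below -/
import Mathlib

section
/- For all integers n ≥ d ≥ 0 and all real x, the sum over 0 ≤ r ≤ d of (-1)^r * C(d,r) * (x-r)^n equals d! times the sum over all strictly increasing sequences 1 ≤ j_1 < j_2 < ... < j_d ≤ n of x^(n-j_d) * ∏_{r=0}^{d-1} (x-(d-r))^(j_{r+1}-j_r-1), where j_0 = 0. -/
open scoped Classical

/-- Strictly increasing sequences `0 = j 0 < j 1 < ... < j d ≤ n`
(i.e. `1 ≤ j_1 < ... < j_d ≤ n` with the convention `j_0 = 0`). -/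
noncomputable def incSeqs (d n : ℕ) : Finset (Fin (d + 1) → ℕ) :=
  (Fintype.piFinset fun _ => Finset.range (n + 1)).filter
    (fun j => j 0 = 0 ∧ StrictMono j ∧ j (Fin.last d) ≤ n)

/-- The alternating binomial sum (the LHS). -/
noncomputable def auxL (d n : ℕ) (x : ℝ) : ℝ :=
  ∑ r ∈ Finset.range (d + 1), (-1 : ℝ) ^ r * (d.choose r) * (x - r) ^ n

/-- The sum over increasing sequences (the RHS without the factorial). -/
noncomputable def auxS (d n : ℕ) (x : ℝ) : ℝ :=
  ∑ j ∈ incSeqs d n,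
    x ^ (n - j (Fin.last d)) *
      ∏ r : Fin d, (x - ((d : ℝ) - (r : ℕ))) ^ (j r.succ - j r.castSucc - 1)

lemma mem_incSeqs {d n : ℕ} {j : Fin (d + 1) → ℕ} :
    j ∈ incSeqs d n ↔ j 0 = 0 ∧ StrictMono j ∧ j (Fin.last d) ≤ n := by
  simp only [incSeqs, Finset.mem_filter, Fintype.mem_piFinset, Finset.mem_range]
  constructor
  · tauto
  · rintro ⟨h0, hm, hl⟩
    exact ⟨fun i => Nat.lt_succ_of_le ((hm.monotone (Fin.le_last i)).trans hl), h0, hm, hl⟩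

lemma incSeqs_zero (n : ℕ) : incSeqs 0 n = {fun _ => 0} := by
  ext j
  rw [mem_incSeqs, Finset.mem_singleton]
  constructor
  · rintro ⟨h0, -, -⟩
    funext i
    have : i = 0 := Fin.ext (by omega)
    rw [this, h0]
  · rintro rfl
    refine ⟨rfl, fun a b h => absurd (Fin.lt_def.mp h) (by omega), Nat.zero_le n⟩

lemma auxL_zero (n : ℕ) (x : ℝ) : auxL 0 n x = x ^ n := by
  simp [auxL]

lemma auxS_zero (n : ℕ) (x : ℝ) : auxS 0 n x = x ^ n := by
  simp [auxS, incSeqs_zero]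

lemma auxL_succ (d n : ℕ) (x : ℝ) :
    auxL (d + 1) (n + 1) x = x * auxL (d + 1) n x + (d + 1) * auxL d n (x - 1) := by
  unfold auxL
  have h : ∀ r ∈ Finset.range (d + 2),
      (-1 : ℝ) ^ r * ((d + 1).choose r) * (x - r) ^ (n + 1) =
        x * ((-1 : ℝ) ^ r * ((d + 1).choose r) * (x - r) ^ n) -
          (-1 : ℝ) ^ r * (((d + 1).choose r) * r) * (x - r) ^ n := by
    intro r _
    ring
  rw [Finset.sum_congr rfl h, Finset.sum_sub_distrib, ← Finset.mul_sum]
  congr 1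
  rw [Finset.sum_range_succ' (fun r => (-1 : ℝ) ^ r * (((d + 1).choose r) * r) * (x - r) ^ n) (d + 1)]
  have h2 : ∀ s ∈ Finset.range (d + 1),
      (-1 : ℝ) ^ (s + 1) * (((d + 1).choose (s + 1)) * (s + 1 : ℕ)) * (x - (s + 1 : ℕ)) ^ n =
        -((d + 1 : ℝ) * ((-1 : ℝ) ^ s * (d.choose s) * ((x - 1) - s) ^ n)) := by
    intro s _
    have hc : (d + 1) * d.choose s = (d + 1).choose (s + 1) * (s + 1) :=
      Nat.add_one_mul_choose_eq d s
    have hcR : (((d + 1).choose (s + 1) : ℕ) : ℝ) * ((s + 1 : ℕ) : ℝ) =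
        ((d + 1 : ℕ) : ℝ) * ((d.choose s : ℕ) : ℝ) := by exact_mod_cast hc.symm
    rw [hcR]
    push_cast
    ring
  rw [Finset.sum_congr rfl h2, Finset.sum_neg_distrib, ← Finset.mul_sum]
  push_cast
  ring

lemma strictMono_snoc {d : ℕ} {f : Fin (d + 1) → ℕ} (hf : StrictMono f) {a : ℕ}
    (ha : f (Fin.last d) < a) : StrictMono (Fin.snoc f a) := by
  rw [Fin.strictMono_iff_lt_succ]
  intro i
  induction i using Fin.lastCases with
  | last =>
      rw [Fin.succ_last, Fin.snoc_castSucc, Fin.snoc_last]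
      exact ha
  | cast k =>
      rw [Fin.succ_castSucc, Fin.snoc_castSucc, Fin.snoc_castSucc]
      exact hf (Fin.castSucc_lt_succ (i := k))

lemma auxS_succ (d n : ℕ) (x : ℝ) :
    auxS (d + 1) (n + 1) x = x * auxS (d + 1) n x + auxS d n (x - 1) := by
  unfold auxS
  rw [← Finset.sum_filter_add_sum_filter_not (incSeqs (d + 1) (n + 1))
    (fun j => j (Fin.last (d + 1)) ≤ n)]
  congr 1
  · have hfil : (incSeqs (d + 1) (n + 1)).filter (fun j => j (Fin.last (d + 1)) ≤ n) =
        incSeqs (d + 1) n := by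
      ext j
      simp only [Finset.mem_filter, mem_incSeqs]
      constructor
      · rintro ⟨⟨h0, hm, -⟩, hl⟩
        exact ⟨h0, hm, hl⟩
      · rintro ⟨h0, hm, hl⟩
        exact ⟨⟨h0, hm, hl.trans (Nat.le_succ n)⟩, hl⟩
    rw [hfil, Finset.mul_sum]
    apply Finset.sum_congr rfl
    intro j hj
    have hl := (mem_incSeqs.mp hj).2.2
    rw [Nat.succ_sub hl, pow_succ]
    ring
  · refine Finset.sum_nbij' (fun j => j ∘ Fin.castSucc) (fun j' => Fin.snoc j' (n + 1))
      ?_ ?_ ?_ ?_ ?_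
    · intro j hj
      rw [Finset.mem_filter] at hj
      obtain ⟨hj, hlast⟩ := hj
      obtain ⟨h0, hm, hl⟩ := mem_incSeqs.mp hj
      rw [mem_incSeqs]
      refine ⟨h0, hm.comp Fin.strictMono_castSucc, ?_⟩
      show j ((Fin.last d).castSucc) ≤ n
      have := hm (Fin.castSucc_lt_last (Fin.last d))
      omega
    · intro j' hj'
      obtain ⟨h0, hm, hl⟩ := mem_incSeqs.mp hj'
      rw [Finset.mem_filter, mem_incSeqs]
      have hsm : StrictMono (Fin.snoc j' (n + 1) : Fin (d + 2) → ℕ) :=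
        strictMono_snoc hm (Nat.lt_succ_of_le hl)
      refine ⟨⟨?_, hsm, ?_⟩, ?_⟩
      · beta_reduce
        rw [← Fin.castSucc_zero, Fin.snoc_castSucc]
        exact h0
      · beta_reduce
        rw [Fin.snoc_last]
      · beta_reduce
        rw [Fin.snoc_last]; omega
    · intro j hj
      rw [Finset.mem_filter] at hj
      obtain ⟨hj, hlast⟩ := hj
      obtain ⟨h0, hm, hl⟩ := mem_incSeqs.mp hj
      have hjl : j (Fin.last (d + 1)) = n + 1 := by omega
      funext i
      beta_reduce
      induction i using Fin.lastCases with
      | last => rw [Fin.snoc_last, hjl]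
      | cast k =>
          rw [Fin.snoc_castSucc]
          rfl
    · intro j' _
      funext i
      beta_reduce
      simp only [Function.comp_apply, Fin.snoc_castSucc]
    · intro j hj
      rw [Finset.mem_filter] at hj
      obtain ⟨hjm, hlast⟩ := hj
      obtain ⟨h0, hm, hl⟩ := mem_incSeqs.mp hjm
      have hjl : j (Fin.last (d + 1)) = n + 1 := by omega
      have hprev : j ((Fin.last d).castSucc) ≤ n := by
        have := hm (Fin.castSucc_lt_last (Fin.last d))
        omega
      beta_reduce
      rw [hjl, Nat.sub_self, pow_zero, one_mul, Fin.prod_univ_castSucc]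
      have h1 : (x - (((d + 1 : ℕ) : ℝ) - ((Fin.last d : ℕ) : ℕ))) ^
            (j (Fin.last d).succ - j (Fin.last d).castSucc - 1) =
          (x - 1) ^ (n - (j ∘ Fin.castSucc) (Fin.last d)) := by
        have hb : (x - (((d + 1 : ℕ) : ℝ) - ((Fin.last d : ℕ) : ℕ))) = x - 1 := by
          push_cast [Fin.val_last]
          try ring
        have he : j (Fin.last d).succ - j (Fin.last d).castSucc - 1 =
            n - (j ∘ Fin.castSucc) (Fin.last d) := by
          show j (Fin.last d).succ - j (Fin.last d).castSucc - 1 =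
            n - j ((Fin.last d).castSucc)
          rw [Fin.succ_last, hjl]
          omega
        rw [hb, he]
      rw [h1, mul_comm]
      congr 1
      apply Finset.prod_congr rfl
      intro r _
      have hb : (x - (((d + 1 : ℕ) : ℝ) - ((r.castSucc : ℕ) : ℕ))) =
          (x - 1) - (((d : ℕ) : ℝ) - ((r : ℕ) : ℕ)) := by
        push_cast [Fin.coe_castSucc]
        try ring
      have he : j r.castSucc.succ - j r.castSucc.castSucc - 1 =
          (j ∘ Fin.castSucc) r.succ - (j ∘ Fin.castSucc) r.castSucc - 1 := by
        show _ = j (Fin.castSucc r.succ) - j (Fin.castSucc r.castSucc) - 1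
        rw [← Fin.succ_castSucc]
      rw [hb, he]

lemma aux_key (n : ℕ) : ∀ (d : ℕ) (x : ℝ), auxL d n x = (d.factorial : ℝ) * auxS d n x := by
  induction n with
  | zero =>
      intro d x
      cases d with
      | zero => rw [auxL_zero, auxS_zero]; norm_num
      | succ d =>
          have hL : auxL (d + 1) 0 x = 0 := by
            have h := Int.alternating_sum_range_choose (n := d + 1)
            rw [if_neg (Nat.succ_ne_zero d)] at h
            have h' : ∑ m ∈ Finset.range (d + 2), (-1 : ℝ) ^ m * ((d + 1).choose m) = 0 := by
              exact_mod_cast congrArg (fun z : ℤ => (z : ℝ)) h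
            simpa [auxL] using h'
          have hS : incSeqs (d + 1) 0 = ∅ := by
            ext j
            simp only [mem_incSeqs, Finset.notMem_empty, iff_false, not_and]
            intro h0 hm
            have := hm (show (0 : Fin (d + 2)) < Fin.last (d + 1) from Fin.last_pos)
            omega
          rw [hL, auxS]
          rw [hS]
          simp
  | succ n ih =>
      intro d x
      cases d with
      | zero => rw [auxL_zero, auxS_zero]; norm_num
      | succ d =>
          rw [auxL_succ, auxS_succ, ih (d + 1) x, ih d (x - 1), Nat.factorial_succ]
          push_cast
          ring

theorem stmt0 (d n : ℕ) (hdn : d ≤ n) (x : ℝ) :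
    ∑ r ∈ Finset.range (d + 1), (-1 : ℝ) ^ r * (d.choose r) * (x - r) ^ n =
      (d.factorial : ℝ) * ∑ j ∈ incSeqs d n,
        x ^ (n - j (Fin.last d)) *
          ∏ r : Fin d, (x - ((d : ℝ) - (r : ℕ))) ^ (j r.succ - j r.castSucc - 1) := by
  exact aux_key n d x
end

section
/- For integers n ≥ d ≥ 0 and any real x, ∑_{k=d}^{n} C(n,k) (-1)^(d-k) x^(n-k) S(k,d) equals the sum over strictly increasing sequences 1 ≤ j_1 < ... < j_d ≤ n of x^(n-j_d) * ∏_{r=0}^{d-1} (x-(d-r))^(j_{r+1}-j_r-1), with j_0 = 0. -/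
open scoped Classical

/-- Stirling numbers of the second kind. -/
def stirling2 : ℕ → ℕ → ℕ
  | 0, 0 => 1
  | 0, _ + 1 => 0
  | _ + 1, 0 => 0
  | n + 1, d + 1 => stirling2 n d + (d + 1) * stirling2 n (d + 1)

lemma stirling2_eq_zero : ∀ {d k : ℕ}, d < k → stirling2 d k = 0
  | 0, 0, h => absurd h (by omega)
  | 0, _ + 1, _ => rfl
  | d + 1, 0, h => absurd h (by omega)
  | d + 1, k + 1, h => by
      show stirling2 d k + (k + 1) * stirling2 d (k + 1) = 0
      rw [stirling2_eq_zero (by omega), stirling2_eq_zero (by omega)]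
      simp

noncomputable def L (n d : ℕ) (x : ℝ) : ℝ :=
  ∑ k ∈ Finset.Icc d n,
    (n.choose k : ℝ) * (-1 : ℝ) ^ (d + k) * x ^ (n - k) * (stirling2 k d : ℝ)

noncomputable def R (n d : ℕ) (x : ℝ) : ℝ :=
  ∑ j ∈ incSeqs d n,
    x ^ (n - j (Fin.last d)) *
      ∏ r : Fin d, (x - ((d : ℝ) - (r : ℕ))) ^ (j r.succ - j r.castSucc - 1)

lemma L_zero (n : ℕ) (x : ℝ) : L n 0 x = x ^ n := by
  unfold L
  rw [Finset.sum_eq_single 0]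
  · simp [stirling2]
  · intro k hk hk0
    match k, hk0 with
    | k + 1, _ => simp [show stirling2 (k + 1) 0 = 0 from rfl]
  · intro h
    exact absurd (Finset.mem_Icc.mpr (by omega)) h

lemma R_zero (n : ℕ) (x : ℝ) : R n 0 x = x ^ n := by
  unfold R
  rw [incSeqs_zero, Finset.sum_singleton]
  simp

lemma L_zero_top (d : ℕ) (x : ℝ) : L 0 (d + 1) x = 0 := by
  unfold L
  rw [Finset.Icc_eq_empty (by omega), Finset.sum_empty]

lemma R_zero_top (d : ℕ) (x : ℝ) : R 0 (d + 1) x = 0 := by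
  unfold R
  apply Finset.sum_eq_zero
  intro j hj
  rw [mem_incSeqs] at hj
  obtain ⟨h0, hm, hl⟩ := hj
  have := hm (show (0 : Fin (d + 2)) < Fin.last (d + 1) by
    rw [Fin.lt_def, Fin.val_zero]
    simp [Fin.last])
  omega

lemma neg_one_zpow (d k : ℕ) :
    ((-1 : ℝ)) ^ ((d : ℤ) - (k : ℤ)) = (-1 : ℝ) ^ (d + k) := by
  rw [zpow_sub₀ (by norm_num : (-1 : ℝ) ≠ 0), zpow_natCast, zpow_natCast, pow_add,
    div_eq_mul_inv, ← inv_pow, inv_neg, inv_one]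

lemma L_rec (n d : ℕ) (x : ℝ) :
    L (n + 1) (d + 1) x = L n d x + (x - ((d : ℝ) + 1)) * L n (d + 1) x := by
  by_cases hdn : d ≤ n
  case neg =>
    unfold L
    rw [Finset.Icc_eq_empty (show ¬ d + 1 ≤ n + 1 by omega),
      Finset.Icc_eq_empty (show ¬ d ≤ n by omega),
      Finset.Icc_eq_empty (show ¬ d + 1 ≤ n by omega)]
    simp
  have hshift : L (n + 1) (d + 1) x =
      ∑ m ∈ Finset.Icc d n, ((n + 1).choose (m + 1) : ℝ) * (-1 : ℝ) ^ (d + m) *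
        x ^ (n - m) * (stirling2 (m + 1) (d + 1) : ℝ) := by
    unfold L
    rw [← Finset.map_add_right_Icc d n 1, Finset.sum_map]
    apply Finset.sum_congr rfl
    intro m hm
    simp only [addRightEmbedding_apply]
    have h1 : d + 1 + (m + 1) = d + m + 2 := by omega
    have h2 : n + 1 - (m + 1) = n - m := by omega
    rw [h1, h2, pow_add]
    ring
  have hterm : ∀ m ∈ Finset.Icc d n,
      ((n + 1).choose (m + 1) : ℝ) * (-1 : ℝ) ^ (d + m) * x ^ (n - m) *
          (stirling2 (m + 1) (d + 1) : ℝ)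
      = (n.choose (m + 1) : ℝ) * (-1 : ℝ) ^ (d + m) * x ^ (n - m) *
          (stirling2 (m + 1) (d + 1) : ℝ)
        + (n.choose m : ℝ) * (-1 : ℝ) ^ (d + m) * x ^ (n - m) * (stirling2 m d : ℝ)
        + ((d : ℝ) + 1) * ((n.choose m : ℝ) * (-1 : ℝ) ^ (d + m) * x ^ (n - m) *
            (stirling2 m (d + 1) : ℝ)) := by
    intro m hm
    have hc : ((n + 1).choose (m + 1) : ℝ) = (n.choose m : ℝ) + (n.choose (m + 1) : ℝ) := by
      rw [Nat.choose_succ_succ]; push_cast; ring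
    have hs : (stirling2 (m + 1) (d + 1) : ℝ)
        = (stirling2 m d : ℝ) + ((d : ℝ) + 1) * (stirling2 m (d + 1) : ℝ) := by
      show ((stirling2 m d + (d + 1) * stirling2 m (d + 1) : ℕ) : ℝ) = _
      push_cast; ring
    rw [hc, hs]
    ring
  rw [hshift, Finset.sum_congr rfl hterm, Finset.sum_add_distrib, Finset.sum_add_distrib]
  have hS1 : ∑ m ∈ Finset.Icc d n, (n.choose (m + 1) : ℝ) * (-1 : ℝ) ^ (d + m) *
      x ^ (n - m) * (stirling2 (m + 1) (d + 1) : ℝ) = x * L n (d + 1) x := by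
    have hA : ∑ k ∈ Finset.Icc (d + 1) (n + 1), (n.choose k : ℝ) * (-1 : ℝ) ^ (d + 1 + k) *
        x ^ (n + 1 - k) * (stirling2 k (d + 1) : ℝ) = x * L n (d + 1) x := by
      rw [Finset.sum_Icc_succ_top (show d + 1 ≤ n + 1 by omega), Nat.choose_succ_self]
      have hcon : ∀ k ∈ Finset.Icc (d + 1) n, (n.choose k : ℝ) * (-1 : ℝ) ^ (d + 1 + k) *
          x ^ (n + 1 - k) * (stirling2 k (d + 1) : ℝ)
          = x * ((n.choose k : ℝ) * (-1 : ℝ) ^ (d + 1 + k) * x ^ (n - k) *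
            (stirling2 k (d + 1) : ℝ)) := by
        intro k hk
        rw [Finset.mem_Icc] at hk
        have h : n + 1 - k = (n - k) + 1 := by omega
        rw [h, pow_succ]
        ring
      rw [Finset.sum_congr rfl hcon, ← Finset.mul_sum]
      unfold L
      push_cast
      ring
    rw [← hA, ← Finset.map_add_right_Icc d n 1, Finset.sum_map]
    apply Finset.sum_congr rfl
    intro m hm
    simp only [addRightEmbedding_apply]
    have h1 : d + 1 + (m + 1) = d + m + 2 := by omega
    have h2 : n + 1 - (m + 1) = n - m := by omega
    rw [h1, h2, pow_add]
    ring
  have hS3 : ∑ m ∈ Finset.Icc d n, ((d : ℝ) + 1) * ((n.choose m : ℝ) * (-1 : ℝ) ^ (d + m) *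
      x ^ (n - m) * (stirling2 m (d + 1) : ℝ)) = -(((d : ℝ) + 1) * L n (d + 1) x) := by
    rw [← Finset.mul_sum]
    have hsub : ∑ m ∈ Finset.Icc d n, (n.choose m : ℝ) * (-1 : ℝ) ^ (d + m) *
        x ^ (n - m) * (stirling2 m (d + 1) : ℝ)
        = ∑ m ∈ Finset.Icc (d + 1) n, (n.choose m : ℝ) * (-1 : ℝ) ^ (d + m) *
          x ^ (n - m) * (stirling2 m (d + 1) : ℝ) := by
      refine (Finset.sum_subset (Finset.Icc_subset_Icc_left (by omega)) ?_).symm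
      intro m hm hnot
      have hmd : m = d := by
        rw [Finset.mem_Icc] at hm
        rw [Finset.mem_Icc] at hnot
        omega
      subst hmd
      rw [stirling2_eq_zero (by omega)]
      simp
    rw [hsub]
    have hneg : ∀ m ∈ Finset.Icc (d + 1) n, (n.choose m : ℝ) * (-1 : ℝ) ^ (d + m) *
        x ^ (n - m) * (stirling2 m (d + 1) : ℝ)
        = -((n.choose m : ℝ) * (-1 : ℝ) ^ (d + 1 + m) * x ^ (n - m) *
          (stirling2 m (d + 1) : ℝ)) := by
      intro m hm
      have h : d + 1 + m = (d + m) + 1 := by omega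
      rw [h, pow_succ]
      ring
    rw [Finset.sum_congr rfl hneg, Finset.sum_neg_distrib]
    unfold L
    push_cast
    ring
  have hS2 : ∑ m ∈ Finset.Icc d n, (n.choose m : ℝ) * (-1 : ℝ) ^ (d + m) *
      x ^ (n - m) * (stirling2 m d : ℝ) = L n d x := rfl
  rw [hS1, hS2, hS3]
  ring

lemma R_rec (n d : ℕ) (x : ℝ) :
    R (n + 1) (d + 1) x = R n d x + (x - ((d : ℝ) + 1)) * R n (d + 1) x := by
  classical
  nth_rewrite 1 [R]
  rw [← Finset.sum_filter_add_sum_filter_not (incSeqs (d + 1) (n + 1)) (fun j => j 1 = 1)]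
  congr 1
  · -- j 1 = 1 part gives R n d x
    rw [R]
    refine Finset.sum_bij' (i := fun j _ => fun i : Fin (d + 1) => j i.succ - 1)
      (j := fun j' _ => fun i : Fin (d + 2) => Fin.cases 0 (fun i' => j' i' + 1) i)
      ?_ ?_ ?_ ?_ ?_
    · intro j hj
      rw [Finset.mem_filter, mem_incSeqs] at hj
      obtain ⟨⟨h0, hm, hl⟩, h1⟩ := hj
      have hpos : ∀ i : Fin (d + 2), i ≠ 0 → 1 ≤ j i := by
        intro i hi
        have := hm (Fin.pos_of_ne_zero hi)
        omega
      rw [mem_incSeqs]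
      refine ⟨?_, ?_, ?_⟩
      · rw [Fin.succ_zero_eq_one]
        omega
      · rw [Fin.strictMono_iff_lt_succ]
        intro i
        have h2 : j i.castSucc.succ < j i.succ.succ := hm (by
          rw [Fin.succ_castSucc]
          exact Fin.castSucc_lt_succ (i := i.succ))
        have h3 := hpos i.castSucc.succ (Fin.succ_ne_zero _)
        omega
      · have hl2 : j ((Fin.last d).succ) ≤ n + 1 := hl
        have hp2 : 1 ≤ j ((Fin.last d).succ) := hpos _ (Fin.succ_ne_zero _)
        omega
    · intro j' hj'
      rw [mem_incSeqs] at hj'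
      obtain ⟨h0, hm, hl⟩ := hj'
      rw [Finset.mem_filter, mem_incSeqs]
      refine ⟨⟨?_, ?_, ?_⟩, ?_⟩
      · simp
      · rw [Fin.strictMono_iff_lt_succ]
        intro i
        induction i using Fin.cases with
        | zero =>
          rw [Fin.castSucc_zero]
          simp only [Fin.cases_zero, Fin.cases_succ]
          omega
        | succ i0 =>
          rw [← Fin.succ_castSucc]
          simp only [Fin.cases_succ]
          have := hm (Fin.castSucc_lt_succ (i := i0))
          omega
      · rw [← Fin.succ_last]
        simp only [Fin.cases_succ]
        omega
      · dsimp only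
        rw [show (1 : Fin (d + 2)) = (0 : Fin (d + 1)).succ from (Fin.succ_zero_eq_one).symm]
        simp only [Fin.cases_succ]
        omega
    · intro j hj
      rw [Finset.mem_filter, mem_incSeqs] at hj
      obtain ⟨⟨h0, hm, hl⟩, h1⟩ := hj
      have hpos : ∀ i : Fin (d + 2), i ≠ 0 → 1 ≤ j i := by
        intro i hi
        have := hm (Fin.pos_of_ne_zero hi)
        omega
      funext i
      induction i using Fin.cases with
      | zero =>
        simp only [Fin.cases_zero]
        omega
      | succ i0 =>
        simp only [Fin.cases_succ]
        have := hpos i0.succ (Fin.succ_ne_zero _)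
        omega
    · intro j' hj'
      funext i
      simp only [Fin.cases_succ]
      omega
    · intro j hj
      rw [Finset.mem_filter, mem_incSeqs] at hj
      obtain ⟨⟨h0, hm, hl⟩, h1⟩ := hj
      have hpos : ∀ i : Fin (d + 2), i ≠ 0 → 1 ≤ j i := by
        intro i hi
        have := hm (Fin.pos_of_ne_zero hi)
        omega
      have hlast : 1 ≤ j (Fin.last (d + 1)) := hpos _ (by
        intro h
        have := congrArg Fin.val h
        simp [Fin.last] at this)
      dsimp only
      congr 1
      · rw [show j ((Fin.last d).succ) = j (Fin.last (d + 1)) from rfl]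
        congr 1
        omega
      · rw [Fin.prod_univ_succ]
        have hfirst : (x - ((((d : ℕ) + 1 : ℕ) : ℝ) - (((0 : Fin (d + 1)) : ℕ) : ℝ))) ^
            (j (0 : Fin (d + 1)).succ - j (0 : Fin (d + 1)).castSucc - 1) = 1 := by
          rw [Fin.succ_zero_eq_one, Fin.castSucc_zero, h0, h1]
          norm_num
        rw [hfirst, one_mul]
        apply Finset.prod_congr rfl
        intro i _
        congr 1
        · rw [Fin.val_succ]
          push_cast
          ring
        · have h3 := hpos i.castSucc.succ (Fin.succ_ne_zero _)
          rw [← Fin.succ_castSucc]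
          omega
  · -- j 1 ≠ 1 part gives (x - (d+1)) * R n (d+1) x
    rw [R, Finset.mul_sum]
    refine Finset.sum_bij' (i := fun j _ => fun i : Fin (d + 2) => j i - 1)
      (j := fun j' _ => fun i : Fin (d + 2) => if i = 0 then 0 else j' i + 1)
      ?_ ?_ ?_ ?_ ?_
    · intro j hj
      rw [Finset.mem_filter, mem_incSeqs] at hj
      obtain ⟨⟨h0, hm, hl⟩, h1⟩ := hj
      have hge : ∀ i : Fin (d + 2), i ≠ 0 → 2 ≤ j i := by
        intro i hi
        have h1le : (1 : Fin (d + 2)) ≤ i := by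
          rw [Fin.le_def, Fin.val_one]
          have := Fin.pos_of_ne_zero hi
          rw [Fin.lt_def, Fin.val_zero] at this
          omega
        have h2 := hm.monotone h1le
        have h3 := hm (show (0 : Fin (d + 2)) < 1 by
          rw [Fin.lt_def, Fin.val_zero, Fin.val_one]; omega)
        omega
      rw [mem_incSeqs]
      refine ⟨?_, ?_, ?_⟩
      · omega
      · rw [Fin.strictMono_iff_lt_succ]
        intro i
        have h2 := hm (Fin.castSucc_lt_succ (i := i))
        have h3 := hge i.succ (Fin.succ_ne_zero _)
        by_cases hc : i.castSucc = 0
        · rw [hc, h0]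
          omega
        · have h4 := hge i.castSucc hc
          omega
      · have := hge (Fin.last (d + 1)) (by
          intro h
          have := congrArg Fin.val h
          simp [Fin.last] at this)
        omega
    · intro j' hj'
      rw [mem_incSeqs] at hj'
      obtain ⟨h0, hm, hl⟩ := hj'
      have hpos : ∀ i : Fin (d + 2), i ≠ 0 → 1 ≤ j' i := by
        intro i hi
        have := hm (Fin.pos_of_ne_zero hi)
        omega
      have hone : (1 : Fin (d + 2)) ≠ 0 := by
        intro h
        have := congrArg Fin.val h
        rw [Fin.val_one, Fin.val_zero] at this
        omega
      have hlastne : (Fin.last (d + 1) : Fin (d + 2)) ≠ 0 := by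
        intro h
        have := congrArg Fin.val h
        simp [Fin.last] at this
      rw [Finset.mem_filter, mem_incSeqs]
      refine ⟨⟨?_, ?_, ?_⟩, ?_⟩
      · rw [if_pos rfl]
      · rw [Fin.strictMono_iff_lt_succ]
        intro i
        rw [if_neg (Fin.succ_ne_zero i)]
        by_cases hc : i.castSucc = 0
        · rw [if_pos hc]
          omega
        · rw [if_neg hc]
          have := hm (Fin.castSucc_lt_succ (i := i))
          omega
      · rw [if_neg hlastne]
        omega
      · dsimp only
        rw [if_neg hone]
        have := hpos 1 hone
        omega
    · intro j hj
      rw [Finset.mem_filter, mem_incSeqs] at hj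
      obtain ⟨⟨h0, hm, hl⟩, h1⟩ := hj
      have hpos : ∀ i : Fin (d + 2), i ≠ 0 → 1 ≤ j i := by
        intro i hi
        have := hm (Fin.pos_of_ne_zero hi)
        omega
      funext i
      dsimp only
      by_cases hc : i = 0
      · rw [if_pos hc, hc]
        omega
      · rw [if_neg hc]
        have := hpos i hc
        omega
    · intro j' hj'
      rw [mem_incSeqs] at hj'
      obtain ⟨h0, hm, hl⟩ := hj'
      funext i
      dsimp only
      by_cases hc : i = 0
      · rw [if_pos hc, hc]
        omega
      · rw [if_neg hc]
        omega
    · intro j hj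
      rw [Finset.mem_filter, mem_incSeqs] at hj
      obtain ⟨⟨h0, hm, hl⟩, h1⟩ := hj
      have hge : ∀ i : Fin (d + 2), i ≠ 0 → 2 ≤ j i := by
        intro i hi
        have h1le : (1 : Fin (d + 2)) ≤ i := by
          rw [Fin.le_def, Fin.val_one]
          have := Fin.pos_of_ne_zero hi
          rw [Fin.lt_def, Fin.val_zero] at this
          omega
        have h2 := hm.monotone h1le
        have h3 := hm (show (0 : Fin (d + 2)) < 1 by
          rw [Fin.lt_def, Fin.val_zero, Fin.val_one]; omega)
        omega
      have hone : 2 ≤ j 1 := hge 1 (by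
        intro h
        have := congrArg Fin.val h
        rw [Fin.val_one, Fin.val_zero] at this
        omega)
      have hlast : 2 ≤ j (Fin.last (d + 1)) := hge _ (by
        intro h
        have := congrArg Fin.val h
        simp [Fin.last] at this)
      have hprod : (∏ r : Fin (d + 1),
            (x - ((((d : ℕ) + 1 : ℕ) : ℝ) - ((r : ℕ) : ℝ))) ^ (j r.succ - j r.castSucc - 1))
          = (x - ((d : ℝ) + 1)) * ∏ r : Fin (d + 1),
            (x - ((((d : ℕ) + 1 : ℕ) : ℝ) - ((r : ℕ) : ℝ))) ^
              ((j r.succ - 1) - (j r.castSucc - 1) - 1) := by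
        rw [Fin.prod_univ_succ, Fin.prod_univ_succ]
        have hbase : (x - ((((d : ℕ) + 1 : ℕ) : ℝ) - (((0 : Fin (d + 1)) : ℕ) : ℝ)))
            = x - ((d : ℝ) + 1) := by
          rw [Fin.val_zero]
          push_cast
          ring
        have hrest : ∀ i : Fin d, (x - ((((d : ℕ) + 1 : ℕ) : ℝ) - ((i.succ : ℕ) : ℝ))) ^
              (j i.succ.succ - j i.succ.castSucc - 1)
            = (x - ((((d : ℕ) + 1 : ℕ) : ℝ) - ((i.succ : ℕ) : ℝ))) ^
              ((j i.succ.succ - 1) - (j i.succ.castSucc - 1) - 1) := by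
          intro i
          congr 1
          have h3 : i.succ.castSucc ≠ 0 := by
            rw [← Fin.succ_castSucc]
            exact Fin.succ_ne_zero _
          have := hge _ h3
          rw [← Fin.succ_castSucc] at this ⊢
          omega
        rw [Finset.prod_congr rfl (fun i _ => hrest i)]
        rw [hbase, Fin.succ_zero_eq_one, Fin.castSucc_zero, h0]
        have he1 : j 1 - 0 - 1 = (j 1 - 2) + 1 := by omega
        have he2 : (j 1 - 1) - (0 - 1) - 1 = j 1 - 2 := by omega
        rw [he1, he2, pow_succ]
        ring
      have hx : n + 1 - j (Fin.last (d + 1)) = n - (j (Fin.last (d + 1)) - 1) := by omega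
      dsimp only
      rw [hprod, hx]
      ring

lemma key (n : ℕ) (x : ℝ) : ∀ d : ℕ, L n d x = R n d x := by
  induction n with
  | zero =>
    intro d
    cases d with
    | zero => rw [L_zero, R_zero]
    | succ d => rw [L_zero_top, R_zero_top]
  | succ n ih =>
    intro d
    cases d with
    | zero => rw [L_zero, R_zero]
    | succ d => rw [L_rec, R_rec, ih, ih]

theorem stmt6 (d n : ℕ) (hdn : d ≤ n) (x : ℝ) :
    ∑ k ∈ Finset.Icc d n,
        (n.choose k : ℝ) * (-1 : ℝ) ^ ((d : ℤ) - (k : ℤ)) * x ^ (n - k) *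
          (stirling2 k d : ℝ) =
      ∑ j ∈ incSeqs d n,
        x ^ (n - j (Fin.last d)) *
          ∏ r : Fin d, (x - ((d : ℝ) - (r : ℕ))) ^ (j r.succ - j r.castSucc - 1) := by
  have h := key n x d
  unfold L R at h
  rw [← h]
  exact Finset.sum_congr rfl fun k _ => by rw [neg_one_zpow]
end

section
/- For integers n ≥ d ≥ 0, evaluating f_{d,n} at 0 gives f_{d,n}(0) = (-1)^(n-d) ∑_{1 ≤ j_1 < ... < j_{d-1} < n} 1 · 2^(j_{d-1}-j_{d-2}) · 3^(j_{d-2}-j_{d-3}) ··· d^(j_1), where f_{d,n}(x) = d! ∑_{1 ≤ j_1 < ... < j_d ≤ n} x^(n-j_d) ∏_{r=0}^{d-1} (x-(d-r))^(j_{r+1}-j_r-1) with j_0 = 0. -/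
open scoped Classical

/-- `f_{d,n}(x)`. -/
noncomputable def f (d n : ℕ) (x : ℝ) : ℝ :=
  (d.factorial : ℝ) * ∑ j ∈ incSeqs d n,
    x ^ (n - j (Fin.last d)) *
      ∏ r : Fin d, (x - ((d : ℝ) - (r : ℕ))) ^ (j r.succ - j r.castSucc - 1)

/-- Sequences `0 = j 0 < j 1 < ... < j d = n`. -/
noncomputable def fullSeqs (d n : ℕ) : Finset (Fin (d + 1) → ℕ) :=
  (Fintype.piFinset fun _ => Finset.range (n + 1)).filter
    (fun j => j 0 = 0 ∧ StrictMono j ∧ j (Fin.last d) = n)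

lemma factorial_eq_prod (d : ℕ) : (d.factorial : ℕ) = ∏ r : Fin d, (d - (r : ℕ)) := by
  rw [Fin.prod_univ_eq_prod_range (fun r => d - r) d, ← Finset.prod_range_add_one_eq_factorial]
  rw [← Finset.prod_range_reflect (fun r => d - r) d]
  apply Finset.prod_congr rfl
  intro i hi
  simp only [Finset.mem_range] at hi
  omega

lemma telescope (d n : ℕ) (j : Fin (d + 1) → ℕ) (hj : j ∈ fullSeqs d n) :
    ∑ r : Fin d, (j r.succ - j r.castSucc) = n := by
  simp only [fullSeqs, Finset.mem_filter] at hj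
  obtain ⟨-, h0, hmono, hlast⟩ := hj
  set J : ℕ → ℕ := fun i => j ⟨min i d, Nat.lt_succ_of_le (min_le_right _ _)⟩ with hJ
  have hmonoJ : Monotone J := by
    intro a b hab
    exact hmono.monotone (by simp [Fin.le_def]; omega)
  have hstep : ∀ r : Fin d, j r.succ - j r.castSucc = J (r + 1) - J r := by
    intro r
    have h1 : (r : ℕ) + 1 ≤ d := r.2
    have e1 : r.succ = (⟨min ((r : ℕ) + 1) d, Nat.lt_succ_of_le (min_le_right _ _)⟩ : Fin (d+1)) := by
      ext; simp only [Fin.val_succ]; omega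
    have e2 : r.castSucc = (⟨min (r : ℕ) d, Nat.lt_succ_of_le (min_le_right _ _)⟩ : Fin (d+1)) := by
      ext; simp only [Fin.coe_castSucc]; omega
    rw [e1, e2]
  calc ∑ r : Fin d, (j r.succ - j r.castSucc)
      = ∑ r : Fin d, (J ((r : ℕ) + 1) - J (r : ℕ)) := by
        exact Finset.sum_congr rfl fun r _ => hstep r
    _ = ∑ r ∈ Finset.range d, (J (r + 1) - J r) :=
        Fin.sum_univ_eq_sum_range (fun i => J (i+1) - J i) d
    _ = J d - J 0 := Finset.sum_range_tsub hmonoJ d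
    _ = n := by
        have hd : J d = n := by
          rw [hJ]; exact (congrArg j (Fin.ext (by simp) : (⟨min d d, Nat.lt_succ_of_le (min_le_right _ _)⟩ : Fin (d+1)) = Fin.last d)).trans hlast
        have h0' : J 0 = 0 := by
          rw [hJ]
          simpa [Nat.min_eq_left (Nat.zero_le d)] using h0
        omega

theorem stmt11 (d n : ℕ) (hdn : d ≤ n) :
    f d n 0 = (-1 : ℝ) ^ (n - d) *
      ∑ j ∈ fullSeqs d n,
        ∏ r : Fin d, (((d : ℕ) - (r : ℕ) : ℕ) : ℝ) ^ (j r.succ - j r.castSucc) := by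
  unfold f
  have hsub : fullSeqs d n ⊆ incSeqs d n := by
    intro j hj
    simp only [fullSeqs, incSeqs, Finset.mem_filter] at *
    exact ⟨hj.1, hj.2.1, hj.2.2.1, le_of_eq hj.2.2.2⟩
  have h1 : ∑ j ∈ incSeqs d n, (0:ℝ) ^ (n - j (Fin.last d)) *
        ∏ r : Fin d, ((0:ℝ) - ((d : ℝ) - (r : ℕ))) ^ (j r.succ - j r.castSucc - 1)
      = ∑ j ∈ fullSeqs d n,
        ∏ r : Fin d, ((0:ℝ) - ((d : ℝ) - (r : ℕ))) ^ (j r.succ - j r.castSucc - 1) := by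
    rw [← Finset.sum_subset hsub]
    · apply Finset.sum_congr rfl
      intro j hj
      simp only [fullSeqs, Finset.mem_filter] at hj
      rw [hj.2.2.2]
      simp
    · intro j hj hnj
      simp only [fullSeqs, incSeqs, Finset.mem_filter] at hj hnj
      have hlt : j (Fin.last d) < n := by
        rcases hj with ⟨h1, h2, h3, h4⟩
        rcases lt_or_eq_of_le h4 with h | h
        · exact h
        · exact absurd ⟨h1, h2, h3, h⟩ hnj
      rw [zero_pow (by omega)]
      ring
  rw [h1, Finset.mul_sum, Finset.mul_sum]
  apply Finset.sum_congr rfl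
  intro j hj
  have htel := telescope d n j hj
  simp only [fullSeqs, Finset.mem_filter] at hj
  obtain ⟨-, h0, hmono, hlast⟩ := hj
  have hg1 : ∀ r : Fin d, 1 ≤ j r.succ - j r.castSucc := fun r =>
    Nat.one_le_iff_ne_zero.mpr (Nat.sub_ne_zero_of_lt (hmono r.castSucc_lt_succ))
  have hcast : ∀ r : Fin d, (0:ℝ) - ((d : ℝ) - (r : ℕ)) = (-1) * ((d - (r : ℕ) : ℕ) : ℝ) := by
    intro r
    rw [Nat.cast_sub (le_of_lt r.2)]
    ring
  calc (d.factorial : ℝ) * ∏ r : Fin d, ((0:ℝ) - ((d : ℝ) - (r : ℕ))) ^ (j r.succ - j r.castSucc - 1)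
      = (d.factorial : ℝ) * ∏ r : Fin d,
          ((-1:ℝ) ^ (j r.succ - j r.castSucc - 1) *
            ((d - (r : ℕ) : ℕ) : ℝ) ^ (j r.succ - j r.castSucc - 1)) := by
        congr 1
        exact Finset.prod_congr rfl fun r _ => by rw [hcast r, mul_pow]
    _ = (d.factorial : ℝ) * ((-1:ℝ) ^ (∑ r : Fin d, (j r.succ - j r.castSucc - 1)) *
          ∏ r : Fin d, ((d - (r : ℕ) : ℕ) : ℝ) ^ (j r.succ - j r.castSucc - 1)) := by
        rw [Finset.prod_mul_distrib, Finset.prod_pow_eq_pow_sum]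
    _ = (-1:ℝ) ^ (n - d) * ((d.factorial : ℝ) *
          ∏ r : Fin d, ((d - (r : ℕ) : ℕ) : ℝ) ^ (j r.succ - j r.castSucc - 1)) := by
        have hsum : ∑ r : Fin d, (j r.succ - j r.castSucc - 1) = n - d := by
          rw [Finset.sum_tsub_distrib _ (fun r _ => hg1 r)]
          simp [htel]
        rw [hsum]; ring
    _ = (-1:ℝ) ^ (n - d) *
          ∏ r : Fin d, ((d - (r : ℕ) : ℕ) : ℝ) ^ (j r.succ - j r.castSucc) := by
        congr 1
        have : (d.factorial : ℝ) = ∏ r : Fin d, ((d - (r : ℕ) : ℕ) : ℝ) := by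
          rw [← Nat.cast_prod, ← factorial_eq_prod]
        rw [this, ← Finset.prod_mul_distrib]
        apply Finset.prod_congr rfl
        intro r _
        rw [← pow_succ']
        congr 1
        have := hg1 r
        omega
end

section
/- For positive integers n and d, ∑_{r=1}^{d} C(d,r) (-1)^(r-1) / r^n = ∑_{1 ≤ j_1 ≤ j_2 ≤ ... ≤ j_n ≤ d} 1/(j_1 j_2 ··· j_n). -/
open scoped Classical

/-- Weakly increasing sequences `1 ≤ j 0 ≤ j 1 ≤ ... ≤ j (k-1) ≤ m`. -/
noncomputable def weakSeqs (k m : ℕ) : Finset (Fin k → ℕ) :=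
  (Fintype.piFinset fun _ => Finset.Icc 1 m).filter Monotone

open Finset

/-- Key hockey-stick-type identity. -/
lemma aux_sum_choose_div (r d : ℕ) (hr : 1 ≤ r) :
    ∑ m ∈ Icc r d, (m.choose r : ℝ) / m = (d.choose r : ℝ) / r := by
  rcases lt_or_ge d r with h | h
  · rw [Icc_eq_empty_of_lt h, sum_empty, Nat.choose_eq_zero_of_lt h]
    simp
  · have key : ∀ m ∈ Icc r d, (m.choose r : ℝ) / m = ((m - 1).choose (r - 1) : ℝ) / r := by
      intro m hm
      simp only [mem_Icc] at hm
      have hm1 : 1 ≤ m := le_trans hr hm.1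
      have hq := Nat.add_one_mul_choose_eq (m - 1) (r - 1)
      rw [Nat.sub_add_cancel hm1,
        Nat.sub_add_cancel hr] at hq
      have hmne : (m : ℝ) ≠ 0 := Nat.cast_ne_zero.2 (by omega)
      have hrne : (r : ℝ) ≠ 0 := Nat.cast_ne_zero.2 (by omega)
      field_simp
      have : ((m * (m - 1).choose (r - 1) : ℕ) : ℝ) = ((m.choose r * r : ℕ) : ℝ) := by
        rw [hq]
      push_cast at this
      linarith
    rw [Finset.sum_congr rfl key, ← Finset.sum_div]
    congr 1
    have hre : ∑ m ∈ Icc r d, ((m - 1).choose (r - 1) : ℝ)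
        = ∑ k ∈ Icc (r - 1) (d - 1), (k.choose (r - 1) : ℝ) := by
      apply Finset.sum_nbij' (fun m => m - 1) (fun k => k + 1)
      · intro m hm; simp only [mem_Icc] at *; omega
      · intro k hk; simp only [mem_Icc] at *; omega
      · intro m hm; simp only [mem_Icc] at hm; omega
      · intro k hk; omega
      · intro m hm; rfl
    rw [hre, ← Nat.cast_sum, Nat.sum_Icc_choose]
    congr 2 <;> omega

lemma aux_base (d : ℕ) (hd : 1 ≤ d) :
    ∑ r ∈ Icc 1 d, (d.choose r : ℝ) * (-1 : ℝ) ^ (r - 1) = 1 := by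
  have h := Int.alternating_sum_range_choose_of_ne (n := d) (by omega)
  have hR : ∑ m ∈ range (d + 1), ((-1 : ℝ) ^ m * d.choose m) = 0 := by
    have := congrArg (Int.cast : ℤ → ℝ) h
    push_cast at this
    simpa using this
  have hins : range (d + 1) = insert 0 (Icc 1 d) := by
    ext x; simp only [mem_range, mem_insert, mem_Icc]; omega
  rw [hins, Finset.sum_insert (by simp)] at hR
  have hsum : ∑ r ∈ Icc 1 d, ((-1 : ℝ) ^ r * d.choose r) = -1 := by
    simp only [pow_zero, Nat.choose_zero_right, Nat.cast_one, one_mul] at hR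
    linarith
  calc ∑ r ∈ Icc 1 d, (d.choose r : ℝ) * (-1 : ℝ) ^ (r - 1)
      = ∑ r ∈ Icc 1 d, -((-1 : ℝ) ^ r * d.choose r) := by
        apply Finset.sum_congr rfl
        intro r hr
        simp only [mem_Icc] at hr
        have hrw : r = (r - 1) + 1 := by omega
        rw [hrw, pow_succ, Nat.add_sub_cancel]
        ring
    _ = 1 := by rw [Finset.sum_neg_distrib, hsum]; norm_num

/-- Recursion for the right-hand side: split off the last index. -/
lemma aux_rhs (n d : ℕ) :
    ∑ j ∈ weakSeqs (n + 1) d, 1 / ∏ i, (j i : ℝ)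
      = ∑ m ∈ Icc 1 d, (1 / (m : ℝ)) * ∑ j ∈ weakSeqs n m, 1 / ∏ i, (j i : ℝ) := by
  have hmul : ∀ m ∈ Icc 1 d, (1 / (m : ℝ)) * ∑ j ∈ weakSeqs n m, 1 / ∏ i, (j i : ℝ)
      = ∑ j ∈ weakSeqs n m, 1 / ((∏ i, (j i : ℝ)) * m) := by
    intro m _
    rw [Finset.mul_sum]
    apply Finset.sum_congr rfl
    intro j _
    rw [one_div_mul_one_div, mul_comm]
  rw [Finset.sum_congr rfl hmul, Finset.sum_sigma']
  apply Finset.sum_nbij'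
    (i := fun f : Fin (n + 1) → ℕ =>
      (⟨f (Fin.last n), fun i : Fin n => f i.castSucc⟩ : (_ : ℕ) × (Fin n → ℕ)))
    (j := fun p : (_ : ℕ) × (Fin n → ℕ) => (Fin.snoc p.2 p.1 : Fin (n + 1) → ℕ))
  · intro f hf
    simp only [weakSeqs, Finset.mem_filter, Fintype.mem_piFinset, mem_Icc,
      Finset.mem_sigma] at hf ⊢
    obtain ⟨hf1, hmono⟩ := hf
    exact ⟨hf1 _, fun i => ⟨(hf1 _).1, hmono (Fin.le_last _)⟩,
      fun a b hab => hmono (Fin.castSucc_le_castSucc_iff.2 hab)⟩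
  · rintro ⟨m, f⟩ hp
    simp only [Finset.mem_sigma, weakSeqs, Finset.mem_filter,
      Fintype.mem_piFinset, mem_Icc] at hp ⊢
    obtain ⟨hm, hf, hmono⟩ := hp
    constructor
    · intro i
      induction i using Fin.lastCases with
      | last => simpa using hm
      | cast i =>
        simp only [Fin.snoc_castSucc]
        exact ⟨(hf i).1, le_trans (hf i).2 hm.2⟩
    · intro a b hab
      induction b using Fin.lastCases with
      | last =>
        rcases eq_or_ne a (Fin.last n) with ha | ha
        · subst ha; exact le_refl _
        · obtain ⟨a', rfl⟩ := Fin.exists_castSucc_eq.2 ha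
          simp only [Fin.snoc_castSucc, Fin.snoc_last]
          exact (hf a').2
      | cast b' =>
        have ha : a ≠ Fin.last n := by
          intro h
          subst h
          exact absurd (lt_of_le_of_lt hab (Fin.castSucc_lt_last b')) (lt_irrefl _)
        obtain ⟨a', rfl⟩ := Fin.exists_castSucc_eq.2 ha
        simp only [Fin.snoc_castSucc]
        exact hmono (Fin.castSucc_le_castSucc_iff.1 hab)
  · intro f _
    exact Fin.snoc_init_self f
  · rintro ⟨m, f⟩ _
    refine Sigma.ext ?_ ?_ <;> simp [Fin.snoc_last, Fin.snoc_castSucc]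
  · intro f _
    rw [Fin.prod_univ_castSucc]

lemma aux_main (n : ℕ) : ∀ d : ℕ, 1 ≤ d →
    ∑ r ∈ Icc 1 d, (d.choose r : ℝ) * (-1 : ℝ) ^ (r - 1) / (r : ℝ) ^ n =
      ∑ j ∈ weakSeqs n d, 1 / ∏ i, (j i : ℝ) := by
  induction n with
  | zero =>
    intro d hd
    simp only [pow_zero, div_one]
    rw [aux_base d hd]
    have hmem : (Fin.elim0 : Fin 0 → ℕ) ∈ weakSeqs 0 d :=
      Finset.mem_filter.2 ⟨Fintype.mem_piFinset.2 (fun i => i.elim0),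
        fun a b _ => a.elim0⟩
    have hsing : weakSeqs 0 d = {Fin.elim0} :=
      Finset.eq_singleton_iff_unique_mem.2
        ⟨hmem, fun f _ => funext fun i => i.elim0⟩
    rw [hsing]
    simp
  | succ n ih =>
    intro d hd
    rw [aux_rhs n d]
    have step : ∀ m ∈ Icc 1 d, (1 / (m : ℝ)) * ∑ j ∈ weakSeqs n m, 1 / ∏ i, (j i : ℝ)
        = ∑ r ∈ Icc 1 m, (1 / (m : ℝ)) * ((m.choose r : ℝ) * (-1 : ℝ) ^ (r - 1) / (r : ℝ) ^ n) := by
      intro m hm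
      simp only [mem_Icc] at hm
      rw [← ih m hm.1, Finset.mul_sum]
    rw [Finset.sum_congr rfl step]
    rw [Finset.sum_comm' (s' := fun r => Icc r d) (t' := Icc 1 d)
      (by intro m r; simp only [mem_Icc]; omega)]
    apply Finset.sum_congr rfl
    intro r hr
    simp only [mem_Icc] at hr
    have hterm : ∀ m ∈ Icc r d,
        (1 / (m : ℝ)) * ((m.choose r : ℝ) * (-1 : ℝ) ^ (r - 1) / (r : ℝ) ^ n)
        = ((m.choose r : ℝ) / m) * ((-1 : ℝ) ^ (r - 1) / (r : ℝ) ^ n) := by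
      intro m _; ring
    rw [Finset.sum_congr rfl hterm, ← Finset.sum_mul, aux_sum_choose_div r d hr.1]
    rw [pow_succ]
    ring

theorem stmt13 (n d : ℕ) (hn : 1 ≤ n) (hd : 1 ≤ d) :
    ∑ r ∈ Finset.Icc 1 d, (d.choose r : ℝ) * (-1 : ℝ) ^ (r - 1) / (r : ℝ) ^ n =
      ∑ j ∈ weakSeqs n d, 1 / ∏ i, (j i : ℝ) := by
  exact aux_main n d hd
end
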